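/- arXiv:2404.00617 — 4 statements merged into one kernel-verified Lean document; each statement's English description precedes it below -/
import Mathlib

section
/- There exists a Gibbs-preserving stochastic matrix mapping p to q (that is, a stochastic matrix Λ with Λγ = γ and Λp = q) if and only if the embedded vector Γ(p) majorises Γ(q), where Γ is the embedding with respect to the rational Gibbs distribution γ. -/
open Finset Matrix

/-- The sum of the `k` largest entries of `p` (as a supremum over subsets of size `k`). -/
noncomputable def sumLargest {ι : Type*} [Fintype ι] (p : ι → ℝ) (k : ℕ) : ℝ :=
  sSup {x : ℝ | ∃ s : Finset ι, s.card = k ∧ ∑ i ∈ s, p i = x}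

/-- `p` majorises `q`: for every `k`, the sum of the `k` largest entries of `p`
is at least the sum of the `k` largest entries of `q`. -/
def Majorizes {ι : Type*} [Fintype ι] (p q : ι → ℝ) : Prop :=
  ∀ k : ℕ, k ≤ Fintype.card ι → sumLargest q k ≤ sumLargest p k

/-- A probability vector: nonnegative entries summing to 1. -/
def IsProbVec {ι : Type*} [Fintype ι] (p : ι → ℝ) : Prop :=
  (∀ i, 0 ≤ p i) ∧ ∑ i, p i = 1

section AuxLemmas

variable {ι : Type*} [Fintype ι]

lemma sumLargest_bdd (p : ι → ℝ) (k : ℕ) :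
    BddAbove {x : ℝ | ∃ s : Finset ι, s.card = k ∧ ∑ i ∈ s, p i = x} := by
  refine ⟨∑ i, |p i|, ?_⟩
  rintro x ⟨s, -, rfl⟩
  calc ∑ i ∈ s, p i ≤ ∑ i ∈ s, |p i| := Finset.sum_le_sum fun i _ => le_abs_self _
    _ ≤ ∑ i, |p i| := Finset.sum_le_sum_of_subset_of_nonneg (Finset.subset_univ s)
        (fun i _ _ => abs_nonneg _)

lemma le_sumLargest (p : ι → ℝ) {k : ℕ} {s : Finset ι} (hs : s.card = k) :
    ∑ i ∈ s, p i ≤ sumLargest p k :=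
  le_csSup (sumLargest_bdd p k) ⟨s, hs, rfl⟩

lemma sumLargest_nonempty (p : ι → ℝ) {k : ℕ} (hk : k ≤ Fintype.card ι) :
    {x : ℝ | ∃ s : Finset ι, s.card = k ∧ ∑ i ∈ s, p i = x}.Nonempty := by
  obtain ⟨s, -, hs⟩ := Finset.exists_subset_card_eq (s := (Finset.univ : Finset ι)) (n := k)
    (by simpa using hk)
  exact ⟨∑ i ∈ s, p i, s, hs, rfl⟩

lemma sumLargest_le (p : ι → ℝ) {k : ℕ} (hk : k ≤ Fintype.card ι) {B : ℝ}
    (h : ∀ s : Finset ι, s.card = k → ∑ i ∈ s, p i ≤ B) : sumLargest p k ≤ B := by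
  refine csSup_le (sumLargest_nonempty p hk) ?_
  rintro x ⟨s, hs, rfl⟩
  exact h s hs

lemma exists_sumLargest (p : ι → ℝ) {k : ℕ} (hk : k ≤ Fintype.card ι) :
    ∃ s : Finset ι, s.card = k ∧ sumLargest p k = ∑ i ∈ s, p i := by
  have hfin : {x : ℝ | ∃ s : Finset ι, s.card = k ∧ ∑ i ∈ s, p i = x}.Finite := by
    have : {x : ℝ | ∃ s : Finset ι, s.card = k ∧ ∑ i ∈ s, p i = x}
        ⊆ (fun s : Finset ι => ∑ i ∈ s, p i) '' Set.univ := by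
      rintro x ⟨s, -, rfl⟩; exact ⟨s, trivial, rfl⟩
    exact ((Set.finite_univ.image _)).subset this
  have := (sumLargest_nonempty p hk).csSup_mem hfin
  obtain ⟨s, hs, hx⟩ := this
  exact ⟨s, hs, hx.symm⟩

lemma sumLargest_comp_equiv (p : ι → ℝ) (σ : Equiv.Perm ι) (k : ℕ) :
    sumLargest (p ∘ σ) k = sumLargest p k := by
  classical
  unfold sumLargest
  congr 1
  ext x
  constructor
  · rintro ⟨s, hs, rfl⟩
    refine ⟨s.image σ, by rw [Finset.card_image_of_injective _ σ.injective, hs], ?_⟩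
    rw [Finset.sum_image (fun a _ b _ h => σ.injective h)]
    rfl
  · rintro ⟨s, hs, rfl⟩
    refine ⟨s.image σ.symm, by rw [Finset.card_image_of_injective _ σ.symm.injective, hs], ?_⟩
    rw [Finset.sum_image (fun a _ b _ h => σ.symm.injective h)]
    simp


lemma threshold_sum_le (a b v : ι → ℝ) (τ : ℝ)
    (hab : ∑ i, a i = ∑ i, b i)
    (h : ∀ i, (a i - b i) * (v i - τ) ≤ 0) :
    ∑ i, a i * v i ≤ ∑ i, b i * v i := by
  have h1 : ∑ i, (a i - b i) * (v i - τ) ≤ 0 :=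
    Finset.sum_nonpos fun i _ => h i
  have h2 : ∑ i, (a i - b i) * (v i - τ)
      = ∑ i, a i * v i - ∑ i, b i * v i - τ * (∑ i, a i) + τ * (∑ i, b i) := by
    rw [Finset.mul_sum, Finset.mul_sum, ← Finset.sum_sub_distrib, ← Finset.sum_sub_distrib,
      ← Finset.sum_add_distrib]
    exact Finset.sum_congr rfl fun i _ => by ring
  rw [hab] at h2
  linarith

/-- Weighted version: if `0 ≤ u ≤ 1` and `∑ u = k`, then `∑ u v ≤ sumLargest v k`. -/
lemma weighted_le_sumLargest [DecidableEq ι] (v u : ι → ℝ) (h0 : ∀ i, 0 ≤ u i)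
    (h1 : ∀ i, u i ≤ 1) {k : ℕ} (hk : k ≤ Fintype.card ι) (hsum : ∑ i, u i = k) :
    ∑ i, u i * v i ≤ sumLargest v k := by
  obtain ⟨s, hcard, hval⟩ := exists_sumLargest v hk
  rcases Nat.eq_zero_or_pos k with rfl | hkpos
  · have : ∀ i, u i = 0 := by
      intro i
      have := Finset.sum_eq_zero_iff_of_nonneg (fun i _ => h0 i) |>.mp (by simpa using hsum)
      exact this i (Finset.mem_univ i)
    rw [Finset.card_eq_zero] at hcard
    subst hcard
    simp [hval, this]
  · -- s nonempty
    have hs_ne : s.Nonempty := Finset.card_pos.mp (hcard ▸ hkpos)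
    -- s is a maximizing set: for a ∈ s, b ∉ s, v b ≤ v a
    have hmax : ∀ a ∈ s, ∀ b, b ∉ s → v b ≤ v a := by
      intro a ha b hb
      by_contra hlt
      push_neg at hlt
      have hcard' : (insert b (s.erase a)).card = k := by
        rw [Finset.card_insert_of_notMem (fun h => hb (Finset.mem_of_mem_erase h)),
          Finset.card_erase_of_mem ha, hcard]
        omega
      have hsum' : ∑ i ∈ insert b (s.erase a), v i = ∑ i ∈ s, v i - v a + v b := by
        rw [Finset.sum_insert (fun h => hb (Finset.mem_of_mem_erase h)),
          Finset.sum_erase_eq_sub ha]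
        ring
      have := le_sumLargest v hcard'
      rw [hsum', ← hval] at this
      linarith
    obtain ⟨a₀, ha₀, hmin⟩ := s.exists_min_image v hs_ne
    -- threshold argument with τ = v a₀
    have key := threshold_sum_le u (fun i => if i ∈ s then (1:ℝ) else 0) v (v a₀)
      (by
        rw [hsum]
        simp [Finset.sum_ite_mem, hcard])
      (by
        intro i
        by_cases hi : i ∈ s
        · simp only [hi, if_pos]
          exact mul_nonpos_of_nonpos_of_nonneg (by linarith [h1 i]) (by linarith [hmin i hi])
        · simp only [hi, if_neg, not_false_iff]
          exact mul_nonpos_of_nonneg_of_nonpos (by linarith [h0 i])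
            (by linarith [hmax a₀ ha₀ i hi]))
    calc ∑ i, u i * v i ≤ ∑ i, (if i ∈ s then (1:ℝ) else 0) * v i := key
      _ = ∑ i ∈ s, v i := by simp [ite_mul, Finset.sum_ite_mem]
      _ = sumLargest v k := hval.symm

/-- For an antitone vector on `Fin n`, `sumLargest` is the sum of the first `k` entries. -/
lemma sumLargest_antitone {n : ℕ} {v : Fin n → ℝ} (hv : Antitone v) {k : ℕ} (hk : k ≤ n) :
    sumLargest v k = ∑ i ∈ Finset.univ.filter (fun i : Fin n => (i : ℕ) < k), v i := by
  have hfcard : (Finset.univ.filter (fun i : Fin n => (i : ℕ) < k)).card = k := by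
    have : (Finset.univ.filter (fun i : Fin n => (i : ℕ) < k))
        = Finset.univ.image (Fin.castLE hk) := by
      ext i
      constructor
      · intro h
        exact Finset.mem_image.mpr ⟨⟨i, (Finset.mem_filter.mp h).2⟩, Finset.mem_univ _, Fin.ext rfl⟩
      · intro h
        obtain ⟨j, -, rfl⟩ := Finset.mem_image.mp h
        exact Finset.mem_filter.mpr ⟨Finset.mem_univ _, j.2⟩
    rw [this, Finset.card_image_of_injective _ (Fin.castLE_injective hk)]
    simp
  refine le_antisymm ?_ (le_sumLargest v hfcard)
  refine sumLargest_le v (by simpa using hk) ?_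
  intro s hs
  rcases Nat.eq_zero_or_pos k with rfl | hkpos
  · rw [Finset.card_eq_zero] at hs; subst hs; simp
  · have hkn : k - 1 < n := by omega
    set τ := v ⟨k - 1, hkn⟩ with hτ
    have key := threshold_sum_le (fun i => if i ∈ s then (1:ℝ) else 0)
      (fun i => if (i : ℕ) < k then (1:ℝ) else 0) v τ
      (by
        rw [Finset.sum_boole, Finset.sum_boole, Finset.filter_mem_eq_inter,
          Finset.univ_inter, hs, hfcard])
      (by
        intro i
        by_cases hi : (i : ℕ) < k
        · have hvi : τ ≤ v i := hv (by simp [Fin.le_def]; omega)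
          simp only [hi, if_pos]
          have : (if i ∈ s then (1:ℝ) else 0) - 1 ≤ 0 := by split <;> norm_num
          exact mul_nonpos_of_nonpos_of_nonneg this (by linarith)
        · have hvi : v i ≤ τ := hv (by simp [Fin.le_def]; omega)
          simp only [hi, if_neg, not_false_iff]
          have : (0:ℝ) ≤ (if i ∈ s then (1:ℝ) else 0) - 0 := by split <;> norm_num
          exact mul_nonpos_of_nonneg_of_nonpos (by simpa using this) (by linarith))
    calc ∑ i ∈ s, v i = ∑ i, (if i ∈ s then (1:ℝ) else 0) * v i := by
          simp [ite_mul, Finset.sum_ite_mem]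
      _ ≤ ∑ i : Fin n, (if (i : ℕ) < k then (1:ℝ) else 0) * v i := key
      _ = ∑ i ∈ Finset.univ.filter (fun i : Fin n => (i : ℕ) < k), v i := by
          rw [Finset.sum_filter]
          exact Finset.sum_congr rfl fun i _ => by split <;> simp

end AuxLemmas

/-- Partial sum of the first `m` entries. -/
noncomputable def Psum {n : ℕ} (x : Fin n → ℝ) (m : ℕ) : ℝ :=
  ∑ i ∈ Finset.univ.filter (fun i : Fin n => (i : ℕ) < m), x i

lemma Psum_succ {n : ℕ} (x : Fin n → ℝ) {m : ℕ} (hm : m < n) :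
    Psum x (m + 1) = Psum x m + x ⟨m, hm⟩ := by
  unfold Psum
  have : Finset.univ.filter (fun i : Fin n => (i : ℕ) < m + 1)
      = insert ⟨m, hm⟩ (Finset.univ.filter (fun i : Fin n => (i : ℕ) < m)) := by
    ext i
    simp only [Finset.mem_filter, Finset.mem_univ, true_and, Finset.mem_insert, Fin.ext_iff]
    omega
  rw [this, Finset.sum_insert (by simp)]
  ring

lemma Psum_univ {n : ℕ} (x : Fin n → ℝ) {m : ℕ} (hm : n ≤ m) :
    Psum x m = ∑ i, x i := by
  unfold Psum
  congr 1
  ext i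
  simp only [Finset.mem_filter, Finset.mem_univ, true_and, iff_true]
  omega

lemma hlp_aux {n : ℕ} (x : Fin n → ℝ) (hx : Antitone x) :
    ∀ (c : ℕ) (y : Fin n → ℝ), Antitone y → (∀ m : ℕ, Psum x m ≤ Psum y m) →
      (∑ i, x i = ∑ i, y i) →
      (Finset.univ.filter fun i => y i ≠ x i).card ≤ c →
      ∃ M ∈ doublyStochastic ℝ (Fin n), M *ᵥ y = x := by
  intro c
  induction c with
  | zero =>
    intro y hy hmaj hsum hc
    have hyx : y = x := by
      funext i
      by_contra h
      have hmem : i ∈ Finset.univ.filter (fun i => y i ≠ x i) := by simp [h]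
      have := Finset.card_pos.mpr ⟨i, hmem⟩
      omega
    exact ⟨1, one_mem _, by rw [hyx, Matrix.one_mulVec]⟩
  | succ c ih =>
    intro y hy hmaj hsum hc
    by_cases hxy : y = x
    · exact ⟨1, one_mem _, by rw [hxy, Matrix.one_mulVec]⟩
    -- the smallest index where y < x
    have hKne : (Finset.univ.filter fun i => y i < x i).Nonempty := by
      by_contra hK
      rw [Finset.not_nonempty_iff_eq_empty, Finset.filter_eq_empty_iff] at hK
      obtain ⟨i₀, hi₀⟩ : ∃ i, y i ≠ x i := by
        by_contra h; push_neg at h; exact hxy (funext h)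
      have hlt : ∑ i, x i < ∑ i, y i :=
        Finset.sum_lt_sum (fun i _ => le_of_not_gt (hK (Finset.mem_univ i)))
          ⟨i₀, Finset.mem_univ _,
            lt_of_le_of_ne (le_of_not_gt (hK (Finset.mem_univ i₀))) (Ne.symm hi₀)⟩
      linarith
    set k : Fin n := (Finset.univ.filter fun i => y i < x i).min' hKne with hk_def
    have hk_mem : y k < x k := by
      have := Finset.min'_mem _ hKne
      rw [Finset.mem_filter] at this
      exact this.2
    have hk_min : ∀ i, y i < x i → k ≤ i := by
      intro i hi
      exact Finset.min'_le _ _ (by simp [hi])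
    -- the largest index j < k where x < y
    have hJne : (Finset.univ.filter fun i => i < k ∧ x i < y i).Nonempty := by
      by_contra hJ
      rw [Finset.not_nonempty_iff_eq_empty, Finset.filter_eq_empty_iff] at hJ
      have heq : ∀ i : Fin n, i < k → y i = x i := by
        intro i hik
        have h1 : ¬ x i < y i := fun h => hJ (Finset.mem_univ i) ⟨hik, h⟩
        have h2 : ¬ y i < x i := fun h => absurd (hk_min i h) (not_le.mpr hik)
        linarith [le_of_not_gt h1, le_of_not_gt h2]
      have hxk : x k ≤ y k := by
        have h1 := hmaj (k.val + 1)
        rw [Psum_succ x k.2, Psum_succ y k.2] at h1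
        have h2 : Psum x k.val = Psum y k.val := by
          unfold Psum
          refine Finset.sum_congr rfl fun i hi => ?_
          rw [Finset.mem_filter] at hi
          exact (heq i (by exact hi.2)).symm
        simp only [Fin.eta] at h1
        linarith
      linarith
    set j : Fin n := (Finset.univ.filter fun i => i < k ∧ x i < y i).max' hJne with hj_def
    have hj_mem : j < k ∧ x j < y j := by
      have := Finset.max'_mem _ hJne
      rw [Finset.mem_filter] at this
      exact this.2
    obtain ⟨hjk, hxyj⟩ := hj_mem
    have hj_max : ∀ i, i < k → x i < y i → i ≤ j := by
      intro i h1 h2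
      exact Finset.le_max' _ _ (by simp [h1, h2])
    have hmid : ∀ i, j < i → i < k → y i = x i := by
      intro i h1 h2
      have h3 : ¬ x i < y i := fun h => absurd (hj_max i h2 h) (not_le.mpr h1)
      have h4 : ¬ y i < x i := fun h => absurd (hk_min i h) (not_le.mpr h2)
      linarith [le_of_not_gt h3, le_of_not_gt h4]
    have hne : j ≠ k := ne_of_lt hjk
    have hxkj : x k ≤ x j := hx (le_of_lt hjk)
    set δ : ℝ := min (y j - x j) (x k - y k) with hδ_def
    have hδ1 : δ ≤ y j - x j := min_le_left _ _
    have hδ2 : δ ≤ x k - y k := min_le_right _ _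
    have hδpos : 0 < δ := lt_min (by linarith) (by linarith)
    have hyy : y k < y j := by linarith
    have hgap : δ + δ ≤ y j - y k := by linarith
    classical
    set y' : Fin n → ℝ := fun i => if i = j then y j - δ else if i = k then y k + δ else y i
      with hy'_def
    have hy'j : y' j = y j - δ := by simp [hy'_def]
    have hy'k : y' k = y k + δ := by simp [hy'_def, hne.symm]
    have hy'other : ∀ i, i ≠ j → i ≠ k → y' i = y i := by
      intro i h1 h2; simp [hy'_def, h1, h2]
    -- y' is antitone
    have hy'anti : Antitone y' := by
      intro a b hab
      rcases eq_or_lt_of_le hab with rfl | hab'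
      · exact le_rfl
      by_cases hbj : b = j
      · subst hbj
        have haj : a ≠ j := ne_of_lt hab'
        have hak : a ≠ k := ne_of_lt (lt_trans hab' hjk)
        rw [hy'other a haj hak, hy'j]
        have := hy (le_of_lt hab')
        linarith
      by_cases hbk : b = k
      · subst hbk
        rw [hy'k]
        by_cases haj : a = j
        · subst haj; rw [hy'j]; linarith
        · have hak : a ≠ k := ne_of_lt hab'
          rw [hy'other a haj hak]
          rcases lt_or_gt_of_ne haj with h | h
          · have := hy (le_of_lt h)
            linarith
          · have := hmid a h hab'
            have := hx (le_of_lt hab')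
            linarith
      · rw [hy'other b hbj hbk]
        by_cases haj : a = j
        · subst haj
          rw [hy'j]
          rcases lt_or_gt_of_ne hbk with h | h
          · have := hmid b hab' h
            have := hx (le_of_lt hab')
            linarith
          · have := hy (le_of_lt h)
            linarith
        by_cases hak : a = k
        · subst hak
          rw [hy'k]
          have := hy (le_of_lt hab')
          linarith
        · rw [hy'other a haj hak]
          exact hy hab
    -- partial sums of y'
    have hgen : ∀ m : ℕ, Psum y' m = Psum y m
        + ((if (j : ℕ) < m then -δ else 0) + (if (k : ℕ) < m then δ else 0)) := by
      intro m
      have hptw : ∀ i : Fin n, y' i = y i + ((if i = j then -δ else 0) + (if i = k then δ else 0)) := by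
        intro i
        by_cases h1 : i = j
        · subst h1; simp [hy'j, hne]; ring
        by_cases h2 : i = k
        · subst h2; simp [hy'k, h1]
        · simp [hy'other i h1 h2, h1, h2]
      unfold Psum
      rw [Finset.sum_congr rfl fun i _ => hptw i]
      rw [Finset.sum_add_distrib, Finset.sum_add_distrib, Finset.sum_ite_eq' _ j,
        Finset.sum_ite_eq' _ k]
      simp only [Finset.mem_filter, Finset.mem_univ, true_and]
    have hslack : ∀ m : ℕ, (j : ℕ) + 1 ≤ m → m ≤ (k : ℕ) → Psum x m + δ ≤ Psum y m := by
      intro m hm1 hm2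
      induction m, hm1 using Nat.le_induction with
      | base =>
        rw [Psum_succ x j.2, Psum_succ y j.2]
        simp only [Fin.eta]
        have := hmaj j.val
        linarith
      | succ m hm ihm =>
        have hmk : m < (k : ℕ) := by omega
        have hmn : m < n := lt_trans hmk k.2
        have hmj : (j : ℕ) < m := by omega
        rw [Psum_succ x hmn, Psum_succ y hmn]
        have heq : y ⟨m, hmn⟩ = x ⟨m, hmn⟩ := hmid ⟨m, hmn⟩ (by simpa [Fin.lt_def]) (by simpa [Fin.lt_def])
        have := ihm (by omega)
        linarith
    have hmaj' : ∀ m : ℕ, Psum x m ≤ Psum y' m := by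
      intro m
      rw [hgen m]
      by_cases h1 : (j : ℕ) < m
      · by_cases h2 : (k : ℕ) < m
        · simp only [h1, h2, if_pos]
          have := hmaj m
          linarith
        · simp only [h1, if_pos, h2, if_neg, not_false_iff]
          have := hslack m (by omega) (by omega)
          linarith
      · have h2 : ¬ (k : ℕ) < m := by
          intro h; exact h1 (lt_trans (by exact_mod_cast hjk) h)
        simp only [h1, h2, if_neg, not_false_iff]
        have := hmaj m
        linarith
    have hsum' : ∑ i, x i = ∑ i, y' i := by
      have h1 := hgen n
      rw [Psum_univ y' (le_refl n), Psum_univ y (le_refl n)] at h1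
      rw [h1]
      simp only [j.2, k.2, if_pos]
      rw [hsum]
      ring
    -- fewer disagreements
    have hcard' : (Finset.univ.filter fun i => y' i ≠ x i).card ≤ c := by
      have hjE : j ∈ Finset.univ.filter fun i => y i ≠ x i := by
        simp only [Finset.mem_filter, Finset.mem_univ, true_and]
        exact ne_of_gt hxyj
      have hkE : k ∈ Finset.univ.filter fun i => y i ≠ x i := by
        simp only [Finset.mem_filter, Finset.mem_univ, true_and]
        exact ne_of_lt hk_mem
      have hcases : y' j = x j ∨ y' k = x k := by
        rcases min_cases (y j - x j) (x k - y k) with ⟨h, -⟩ | ⟨h, -⟩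
        · left; rw [hy'j, hδ_def, h]; ring
        · right; rw [hy'k, hδ_def, h]; ring
      have hsub : ∀ (a : Fin n), y' a = x a → a ∈ ({j, k} : Finset (Fin n)) →
          (Finset.univ.filter fun i => y' i ≠ x i)
            ⊆ (Finset.univ.filter fun i => y i ≠ x i).erase a := by
        intro a ha hamem i hi
        rw [Finset.mem_filter] at hi
        refine Finset.mem_erase.mpr ⟨fun h => hi.2 (h ▸ ha), ?_⟩
        simp only [Finset.mem_filter, Finset.mem_univ, true_and]
        by_cases h1 : i = j
        · subst h1; exact ne_of_gt hxyj
        by_cases h2 : i = k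
        · subst h2; exact ne_of_lt hk_mem
        · rw [hy'other i h1 h2] at hi
          exact hi.2
      rcases hcases with h | h
      · have := Finset.card_le_card (hsub j h (by simp))
        have := Finset.card_erase_of_mem hjE
        omega
      · have := Finset.card_le_card (hsub k h (by simp))
        have := Finset.card_erase_of_mem hkE
        omega
    obtain ⟨M', hM', hM'y⟩ := ih y' hy'anti hmaj' hsum' hcard'
    -- the T-transform
    set sc : ℝ := δ / (y j - y k) with hsc_def
    have hyyne : y j - y k ≠ 0 := by linarith
    have hsc0 : 0 ≤ sc := div_nonneg (le_of_lt hδpos) (by linarith)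
    have hsc1 : sc ≤ 1 := by
      rw [div_le_one (by linarith)]
      linarith
    set P : Matrix (Fin n) (Fin n) ℝ := (Equiv.swap j k).permMatrix ℝ with hP_def
    have hPmem : P ∈ doublyStochastic ℝ (Fin n) := permMatrix_mem_doublyStochastic
    set T : Matrix (Fin n) (Fin n) ℝ := (1 - sc) • (1 : Matrix (Fin n) (Fin n) ℝ) + sc • P
      with hT_def
    have hTmem : T ∈ doublyStochastic ℝ (Fin n) :=
      convex_doublyStochastic (one_mem _) hPmem (by linarith) hsc0 (by ring)
    have hPy : P *ᵥ y = fun i => y (Equiv.swap j k i) := by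
      funext i
      simp [hP_def, Matrix.mulVec, dotProduct, PEquiv.toMatrix_apply, Equiv.toPEquiv_apply]
    have hTy : T *ᵥ y = y' := by
      funext i
      rw [hT_def, Matrix.add_mulVec, Matrix.smul_mulVec, Matrix.smul_mulVec,
        Matrix.one_mulVec, hPy]
      simp only [Pi.add_apply, Pi.smul_apply, smul_eq_mul]
      by_cases h1 : i = j
      · subst h1
        rw [Equiv.swap_apply_left, hy'j]
        have hsc' : sc * (y j - y k) = δ := by rw [hsc_def]; exact div_mul_cancel₀ _ hyyne
        linear_combination -hsc'
      by_cases h2 : i = k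
      · subst h2
        rw [Equiv.swap_apply_right, hy'k]
        have hsc' : sc * (y j - y k) = δ := by rw [hsc_def]; exact div_mul_cancel₀ _ hyyne
        linear_combination hsc'
      · rw [Equiv.swap_apply_of_ne_of_ne h1 h2, hy'other i h1 h2]
        ring
    refine ⟨M' * T, mul_mem hM' hTmem, ?_⟩
    rw [← Matrix.mulVec_mulVec, hTy, hM'y]

/-- Hardy–Littlewood–Pólya: if `y` majorises `x` (and sums agree), there is a doubly
stochastic matrix mapping `y` to `x`. -/
lemma hlp {n : ℕ} (x y : Fin n → ℝ) (hsum : ∑ i, x i = ∑ i, y i)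
    (hmaj : ∀ k : ℕ, k ≤ n → sumLargest x k ≤ sumLargest y k) :
    ∃ M ∈ doublyStochastic ℝ (Fin n), M *ᵥ y = x := by
  classical
  set σ : Equiv.Perm (Fin n) := Tuple.sort (fun i => -x i) with hσ
  set τ : Equiv.Perm (Fin n) := Tuple.sort (fun i => -y i) with hτ
  have hxs : Antitone (x ∘ σ) := by
    intro a b hab
    have := Tuple.monotone_sort (fun i => -x i) hab
    simpa using this
  have hys : Antitone (y ∘ τ) := by
    intro a b hab
    have := Tuple.monotone_sort (fun i => -y i) hab
    simpa using this
  have hsum' : ∑ i, (x ∘ σ) i = ∑ i, (y ∘ τ) i := by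
    simp only [Function.comp_apply]
    rw [Fintype.sum_bijective σ σ.bijective _ x (fun i => rfl),
      Fintype.sum_bijective τ τ.bijective _ y (fun i => rfl)]
    exact hsum
  have hmaj' : ∀ m : ℕ, Psum (x ∘ σ) m ≤ Psum (y ∘ τ) m := by
    intro m
    rcases le_or_gt m n with hm | hm
    · have h1 : Psum (x ∘ σ) m = sumLargest x m := by
        rw [← sumLargest_comp_equiv x σ m, sumLargest_antitone hxs hm]; rfl
      have h2 : Psum (y ∘ τ) m = sumLargest y m := by
        rw [← sumLargest_comp_equiv y τ m, sumLargest_antitone hys hm]; rfl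
      rw [h1, h2]
      exact hmaj m hm
    · rw [Psum_univ _ (le_of_lt hm), Psum_univ _ (le_of_lt hm)]
      exact le_of_eq hsum'
  obtain ⟨M₀, hM₀, hM₀y⟩ := hlp_aux (x ∘ σ) hxs
    (Finset.univ.filter fun i => (y ∘ τ) i ≠ (x ∘ σ) i).card (y ∘ τ) hys hmaj' hsum' le_rfl
  rw [mem_doublyStochastic_iff_sum] at hM₀
  obtain ⟨hM₀nn, hM₀row, hM₀col⟩ := hM₀
  refine ⟨fun i j => M₀ (σ.symm i) (τ.symm j), ?_, ?_⟩
  · refine mem_doublyStochastic_iff_sum.mpr ?_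
    refine ⟨fun i j => hM₀nn _ _, fun i => ?_, fun j => ?_⟩
    · rw [Fintype.sum_bijective τ.symm τ.symm.bijective _
        (fun j' => M₀ (σ.symm i) j') (fun j => rfl)]
      exact hM₀row _
    · rw [Fintype.sum_bijective σ.symm σ.symm.bijective _
        (fun i' => M₀ i' (τ.symm j)) (fun i => rfl)]
      exact hM₀col _
  · funext i
    have : (fun j => M₀ (σ.symm i) (τ.symm j) * y j)
        = fun j => (fun j' => M₀ (σ.symm i) j' * y (τ j')) (τ.symm j) := by
      funext j; simp
    calc ∑ j, M₀ (σ.symm i) (τ.symm j) * y j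
        = ∑ j, (fun j' => M₀ (σ.symm i) j' * y (τ j')) (τ.symm j) := by rw [this]
      _ = ∑ j', M₀ (σ.symm i) j' * y (τ j') :=
          Fintype.sum_bijective τ.symm τ.symm.bijective _ _ (fun j => rfl)
      _ = (M₀ *ᵥ (y ∘ τ)) (σ.symm i) := rfl
      _ = x i := by rw [hM₀y]; simp

/-- Fiberwise summation over boxes. -/
lemma sum_box {d N : ℕ} (box : Fin N → Fin d) (S : Finset (Fin N)) (f : Fin d → ℝ) :
    ∑ j ∈ S, f (box j) = ∑ i, ((S.filter fun j => box j = i).card : ℝ) * f i := by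
  classical
  rw [← Finset.sum_fiberwise S box (fun j => f (box j))]
  refine Finset.sum_congr rfl fun i _ => ?_
  have h1 : ∀ j ∈ S.filter fun j => box j = i, f (box j) = f i := fun j hj => by
    rw [(Finset.mem_filter.mp hj).2]
  rw [Finset.sum_congr rfl h1, Finset.sum_const, nsmul_eq_mul]

/-- There exists a Gibbs-preserving stochastic matrix mapping `p` to `q` iff the
embedded vector `Γ(p)` majorises `Γ(q)`, where the embedding is with respect to the
rational Gibbs distribution `γᵢ = Dᵢ/N`. -/
theorem gibbs_preserving_iff_embedded_majorization {d N : ℕ}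
    (D : Fin d → ℕ) (hDpos : ∀ i, 0 < D i) (hN : ∑ i, D i = N)
    (box : Fin N → Fin d)
    (hbox : ∀ i : Fin d, (Finset.univ.filter fun j => box j = i).card = D i)
    (p q : Fin d → ℝ) (hp : IsProbVec p) (hq : IsProbVec q) :
    (∃ Λ : Matrix (Fin d) (Fin d) ℝ,
        (∀ i j, 0 ≤ Λ i j) ∧ (∀ j, ∑ i, Λ i j = 1) ∧
        (Λ.mulVec (fun i => (D i : ℝ) / (N : ℝ)) = fun i => (D i : ℝ) / (N : ℝ)) ∧
        Λ.mulVec p = q) ↔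
      Majorizes (fun j : Fin N => p (box j) / (D (box j) : ℝ))
        (fun j : Fin N => q (box j) / (D (box j) : ℝ)) := by
  classical
  have hd : 0 < d := by
    rcases Nat.eq_zero_or_pos d with rfl | h
    · exfalso; have := hp.2; simp at this
    · exact h
  have hNpos : 0 < N := by
    rw [← hN]
    exact Finset.sum_pos (fun i _ => hDpos i) ⟨⟨0, hd⟩, Finset.mem_univ _⟩
  have hNne : (N : ℝ) ≠ 0 := Nat.cast_ne_zero.mpr (Nat.pos_iff_ne_zero.mp hNpos)
  have hDne : ∀ i, (D i : ℝ) ≠ 0 := fun i => Nat.cast_ne_zero.mpr (Nat.pos_iff_ne_zero.mp (hDpos i))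
  set Γp : Fin N → ℝ := fun j => p (box j) / (D (box j) : ℝ) with hΓp
  set Γq : Fin N → ℝ := fun j => q (box j) / (D (box j) : ℝ) with hΓq
  -- total sums of embedded vectors
  have hΓsum : ∀ f : Fin d → ℝ, ∑ j, f (box j) / (D (box j) : ℝ) = ∑ i, f i := by
    intro f
    have h : ∑ j, f (box j) / (D (box j) : ℝ)
        = ∑ i, ((Finset.univ.filter fun j => box j = i).card : ℝ) * (f i / (D i : ℝ)) :=
      sum_box box Finset.univ (fun i => f i / (D i : ℝ))
    rw [h]
    refine Finset.sum_congr rfl fun i _ => ?_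
    rw [hbox i, ← mul_div_assoc]
    exact mul_div_cancel_left₀ _ (hDne i)
  constructor
  · rintro ⟨Λ, hΛnn, hΛcol, hΛγ, hΛp⟩
    intro k hk
    rw [Fintype.card_fin] at hk
    refine sumLargest_le _ (by simpa using hk) ?_
    intro S hS
    -- weights on Fin d
    set t : Fin d → ℝ := fun i => ((S.filter fun j => box j = i).card : ℝ) / D i with ht
    have ht0 : ∀ i, 0 ≤ t i := fun i => div_nonneg (Nat.cast_nonneg _) (Nat.cast_nonneg _)
    have ht1 : ∀ i, t i ≤ 1 := by
      intro i
      rw [ht]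
      refine div_le_one_of_le₀ ?_ (Nat.cast_nonneg _)
      have := Finset.card_le_card (Finset.filter_subset_filter (fun j => box j = i)
        (Finset.subset_univ S))
      rw [hbox i] at this
      exact_mod_cast this
    have htD : ∑ i, t i * D i = (k : ℝ) := by
      have h1 : ∀ i, t i * D i = ((S.filter fun j => box j = i).card : ℝ) := by
        intro i; rw [ht]; exact div_mul_cancel₀ _ (hDne i)
      rw [Finset.sum_congr rfl fun i _ => h1 i]
      rw [← Nat.cast_sum]
      rw [← Finset.card_eq_sum_card_fiberwise (fun j _ => Finset.mem_univ (box j)), hS]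
    -- column weights
    set s : Fin d → ℝ := fun m => ∑ i, t i * Λ i m with hs
    have hs0 : ∀ m, 0 ≤ s m := fun m =>
      Finset.sum_nonneg fun i _ => mul_nonneg (ht0 i) (hΛnn i m)
    have hs1 : ∀ m, s m ≤ 1 := by
      intro m
      rw [hs]
      calc ∑ i, t i * Λ i m ≤ ∑ i, Λ i m :=
            Finset.sum_le_sum fun i _ => mul_le_of_le_one_left (hΛnn i m) (ht1 i)
        _ = 1 := hΛcol m
    have hΛD : ∀ i, ∑ m, Λ i m * D m = D i := by
      intro i
      have h := congrFun hΛγ i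
      simp only [Matrix.mulVec, dotProduct] at h
      have h2 : ∑ m, Λ i m * ((D m : ℝ) / N) = (∑ m, Λ i m * D m) / N := by
        rw [Finset.sum_div]
        exact Finset.sum_congr rfl fun m _ => by ring
      rw [h2] at h
      field_simp at h
      exact h
    have hsD : ∑ m, s m * D m = (k : ℝ) := by
      rw [show ∑ m, s m * (D m : ℝ) = ∑ m, ∑ i, t i * Λ i m * D m from
        Finset.sum_congr rfl fun m _ => by rw [hs, Finset.sum_mul]]
      rw [Finset.sum_comm]
      calc ∑ i, ∑ m, t i * Λ i m * D m = ∑ i, t i * D i := by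
            refine Finset.sum_congr rfl fun i _ => ?_
            rw [show ∑ m, t i * Λ i m * (D m:ℝ) = t i * ∑ m, Λ i m * D m from by
              rw [Finset.mul_sum]; exact Finset.sum_congr rfl fun m _ => by ring]
            rw [hΛD i]
        _ = k := htD
    -- the sum over S
    have hSsum : ∑ j ∈ S, Γq j = ∑ i, t i * q i := by
      have h : ∑ j ∈ S, Γq j
          = ∑ i, ((S.filter fun j => box j = i).card : ℝ) * (q i / (D i : ℝ)) :=
        sum_box box S (fun i => q i / (D i : ℝ))
      rw [h]
      exact Finset.sum_congr rfl fun i _ => by rw [ht]; ring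
    have hq_eq : ∀ i, q i = ∑ m, Λ i m * p m := by
      intro i
      have := congrFun hΛp i
      simp only [Matrix.mulVec, dotProduct] at this
      exact this.symm
    have htq : ∑ i, t i * q i = ∑ m, s m * p m := by
      calc ∑ i, t i * q i = ∑ i, ∑ m, t i * Λ i m * p m := by
            refine Finset.sum_congr rfl fun i _ => ?_
            rw [hq_eq i, Finset.mul_sum]
            exact Finset.sum_congr rfl fun m _ => by ring
        _ = ∑ m, ∑ i, t i * Λ i m * p m := Finset.sum_comm
        _ = ∑ m, s m * p m := by
            refine Finset.sum_congr rfl fun m _ => ?_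
            rw [hs, Finset.sum_mul]
    -- lift to Fin N
    have hu0 : ∀ j : Fin N, 0 ≤ s (box j) := fun j => hs0 _
    have hu1 : ∀ j : Fin N, s (box j) ≤ 1 := fun j => hs1 _
    have husum : ∑ j, s (box j) = (k : ℝ) := by
      have h : ∑ j, s (box j)
          = ∑ i, ((Finset.univ.filter fun j => box j = i).card : ℝ) * s i :=
        sum_box box Finset.univ s
      rw [h, ← hsD]
      exact Finset.sum_congr rfl fun i _ => by rw [hbox i]; ring
    have huval : ∑ j, s (box j) * Γp j = ∑ m, s m * p m := by
      have h : ∑ j, s (box j) * Γp j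
          = ∑ m, ((Finset.univ.filter fun j => box j = m).card : ℝ) * (s m * (p m / (D m : ℝ))) :=
        sum_box box Finset.univ (fun m => s m * (p m / (D m : ℝ)))
      rw [h]
      refine Finset.sum_congr rfl fun m _ => ?_
      rw [hbox m, show ((D m : ℝ)) * (s m * (p m / (D m : ℝ)))
        = s m * p m * ((D m : ℝ) / (D m : ℝ)) from by ring, div_self (hDne m), mul_one]
    calc ∑ j ∈ S, Γq j = ∑ m, s m * p m := by rw [hSsum, htq]
      _ = ∑ j, s (box j) * Γp j := huval.symm
      _ ≤ sumLargest Γp k :=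
          weighted_le_sumLargest Γp (fun j => s (box j)) hu0 hu1 (by simpa using hk) husum
  · intro hmaj
    have hsum : ∑ j, Γq j = ∑ j, Γp j := by
      rw [hΓq, hΓp, hΓsum q, hΓsum p, hp.2, hq.2]
    obtain ⟨M, hM, hMp⟩ := hlp Γq Γp hsum
      (fun k hk => hmaj k (by simpa using hk))
    rw [mem_doublyStochastic_iff_sum] at hM
    obtain ⟨hMnn, hMrow, hMcol⟩ := hM
    set B : Fin d → Finset (Fin N) := fun i => Finset.univ.filter fun j => box j = i with hB
    refine ⟨fun i m => (∑ j ∈ B i, ∑ l ∈ B m, M j l) / D m, ?_, ?_, ?_, ?_⟩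
    · intro i m
      exact div_nonneg (Finset.sum_nonneg fun j _ => Finset.sum_nonneg fun l _ => hMnn j l)
        (Nat.cast_nonneg _)
    · intro m
      rw [← Finset.sum_div]
      have h1 : ∑ i, ∑ j ∈ B i, (fun j => ∑ l ∈ B m, M j l) j = ∑ j, ∑ l ∈ B m, M j l :=
        Finset.sum_fiberwise Finset.univ box _
      simp only at h1
      rw [h1, show (∑ x, ∑ l ∈ B m, M x l) = ∑ l ∈ B m, ∑ x, M x l from Finset.sum_comm]
      have h2 : ∑ l ∈ B m, ∑ j, M j l = (D m : ℝ) := by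
        rw [Finset.sum_congr rfl fun l _ => hMcol l, Finset.sum_const, ← hbox m]
        simp [hB]
      rw [h2, div_self (hDne m)]
    · funext i
      simp only [Matrix.mulVec, dotProduct]
      have hterm : ∀ m, (∑ j ∈ B i, ∑ l ∈ B m, M j l) / (D m : ℝ) * ((D m : ℝ) / N)
          = (∑ j ∈ B i, ∑ l ∈ B m, M j l) / N := by
        intro m
        rw [div_mul_div_comm, mul_comm (∑ j ∈ B i, ∑ l ∈ B m, M j l) ((D m : ℝ)),
          mul_div_mul_left _ _ (hDne m)]
      rw [Finset.sum_congr rfl fun m _ => hterm m, ← Finset.sum_div]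
      have h3 : ∑ m, ∑ j ∈ B i, ∑ l ∈ B m, M j l = ∑ j ∈ B i, ∑ m, ∑ l ∈ B m, M j l :=
        Finset.sum_comm
      have h4 : ∀ j : Fin N, ∑ m, ∑ l ∈ B m, M j l = (1 : ℝ) := by
        intro j
        rw [Finset.sum_fiberwise Finset.univ box (fun l => M j l)]
        exact hMrow j
      rw [h3, Finset.sum_congr rfl fun j _ => h4 j, Finset.sum_const, ← hbox i]
      simp [hB]
    · funext i
      simp only [Matrix.mulVec, dotProduct]
      have hterm : ∀ m, (∑ j ∈ B i, ∑ l ∈ B m, M j l) / (D m : ℝ) * p m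
          = ∑ j ∈ B i, ∑ l ∈ B m, M j l * Γp l := by
        intro m
        rw [div_mul_eq_mul_div, Finset.sum_mul, Finset.sum_div]
        refine Finset.sum_congr rfl fun j _ => ?_
        rw [Finset.sum_mul, Finset.sum_div]
        refine Finset.sum_congr rfl fun l hl => ?_
        have hbl : box l = m := by
          have := hl
          rw [hB] at this
          exact (Finset.mem_filter.mp this).2
        simp only [hΓp]
        rw [hbl]
        ring
      rw [Finset.sum_congr rfl fun m _ => hterm m]
      have h3 : ∑ m, ∑ j ∈ B i, ∑ l ∈ B m, M j l * Γp l
          = ∑ j ∈ B i, ∑ m, ∑ l ∈ B m, M j l * Γp l := Finset.sum_comm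
      have h4 : ∀ j : Fin N, ∑ m, ∑ l ∈ B m, M j l * Γp l = Γq j := by
        intro j
        rw [Finset.sum_fiberwise Finset.univ box (fun l => M j l * Γp l)]
        have := congrFun hMp j
        simpa [Matrix.mulVec, dotProduct] using this
      have h5 : ∀ j ∈ B i, Γq j = q i / (D i : ℝ) := by
        intro j hj
        have hbj : box j = i := by
          rw [hB] at hj
          exact (Finset.mem_filter.mp hj).2
        simp only [hΓq]
        rw [hbj]
      rw [h3, Finset.sum_congr rfl fun j hj => (h4 j).trans (h5 j hj), Finset.sum_const]
      have hcard : (B i).card = D i := by rw [hB]; exact hbox i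
      rw [hcard, nsmul_eq_mul, mul_comm, div_mul_cancel₀ _ (hDne i)]
end

section
/- No transformation can be catalysed by a uniform state: if p ⊗ η_n majorises q ⊗ η_n, where η_n = (1/n,...,1/n), then already p majorises q. -/
open Finset

lemma sumLargest_set_finite {ι : Type*} [Fintype ι] (p : ι → ℝ) (k : ℕ) :
    {x : ℝ | ∃ s : Finset ι, s.card = k ∧ ∑ i ∈ s, p i = x}.Finite :=
  (Set.finite_range (fun s : Finset ι => ∑ i ∈ s, p i)).subset
    (by rintro x ⟨s, _, rfl⟩; exact ⟨s, rfl⟩)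

lemma sumLargest_spec {ι : Type*} [Fintype ι] (p : ι → ℝ) (k : ℕ)
    (hk : k ≤ Fintype.card ι) :
    ∃ t : Finset ι, t.card = k ∧ sumLargest p k = ∑ i ∈ t, p i ∧
      ∀ s : Finset ι, s.card = k → ∑ i ∈ s, p i ≤ sumLargest p k := by
  have hfin := sumLargest_set_finite p k
  obtain ⟨t0, _, ht0⟩ := Finset.exists_subset_card_eq (s := (univ : Finset ι)) (n := k) (by simpa using hk)
  have hne : {x : ℝ | ∃ s : Finset ι, s.card = k ∧ ∑ i ∈ s, p i = x}.Nonempty :=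
    ⟨_, t0, ht0, rfl⟩
  obtain ⟨t, htc, hts⟩ := hne.csSup_mem hfin
  exact ⟨t, htc, hts.symm, fun s hs => le_csSup hfin.bddAbove ⟨s, hs, rfl⟩⟩

lemma sumLargest_tensor {d n : ℕ} (hn : 0 < n) {k : ℕ} (hk : k ≤ d) (p : Fin d → ℝ) :
    sumLargest (fun x : Fin d × Fin n => p x.1 * (n : ℝ)⁻¹) (k * n) = sumLargest p k := by
  have hn' : (n : ℝ) ≠ 0 := Nat.cast_ne_zero.mpr hn.ne'
  obtain ⟨t, htc, hts, hmax⟩ := sumLargest_spec p k (by simpa using hk)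
  -- exchange property of the maximizer
  have hex : ∀ i ∈ t, ∀ j, j ∉ t → p j ≤ p i := by
    intro i hi j hj
    have hk1 : 1 ≤ k := htc ▸ Finset.card_pos.mpr ⟨i, hi⟩
    have hcard : (insert j (t.erase i)).card = k := by
      rw [card_insert_of_notMem (fun hmem => hj (mem_of_mem_erase hmem)),
        card_erase_of_mem hi, htc]
      omega
    have := hmax _ hcard
    rw [hts] at this
    rw [sum_insert (fun hmem => hj (mem_of_mem_erase hmem)),
      Finset.sum_erase_eq_sub hi] at this
    linarith
  apply le_antisymm
  · -- upper bound
    have hne : {x : ℝ | ∃ s : Finset (Fin d × Fin n), s.card = k * n ∧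
        ∑ i ∈ s, p i.1 * (n : ℝ)⁻¹ = x}.Nonempty := by
      obtain ⟨s0, _, hs0⟩ := Finset.exists_subset_card_eq (s := (univ : Finset (Fin d × Fin n))) (n := k * n)
        (by simp; exact Nat.mul_le_mul_right n hk)
      exact ⟨_, s0, hs0, rfl⟩
    apply csSup_le hne
    rintro x ⟨s, hs, rfl⟩
    set c : Fin d → ℝ := fun i => ((s.filter (fun x => x.1 = i)).card : ℝ) with hc
    have hc0 : ∀ i, 0 ≤ c i := fun i => Nat.cast_nonneg _
    have hc1 : ∀ i, c i ≤ n := by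
      intro i
      have hsub : s.filter (fun x => x.1 = i) ⊆ {i} ×ˢ univ := by
        intro x hx
        rw [mem_filter] at hx
        rw [Finset.mem_product]
        exact ⟨by simp [hx.2], mem_univ _⟩
      have hle := Finset.card_le_card hsub
      simp only [Finset.card_product, Finset.card_singleton, Finset.card_univ,
        Fintype.card_fin, one_mul] at hle
      simp only [hc]
      exact_mod_cast hle
    have hctot : ∑ i, c i = (k : ℝ) * n := by
      have hnat : ∑ i, (s.filter (fun x => x.1 = i)).card = k * n :=
        (Finset.card_eq_sum_card_fiberwise
          (f := fun x : Fin d × Fin n => x.1) (s := s) (t := univ)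
          (fun x _ => mem_univ _)).symm.trans hs
      have hcast := congrArg (Nat.cast (R := ℝ)) hnat
      push_cast at hcast
      simpa [hc] using hcast
    have hsum : ∑ x ∈ s, p x.1 * (n : ℝ)⁻¹ = (∑ i, p i * c i) * (n : ℝ)⁻¹ := by
      rw [← Finset.sum_mul]
      congr 1
      rw [← Finset.sum_fiberwise_of_maps_to (g := fun x : Fin d × Fin n => x.1)
        (t := univ) (fun x _ => mem_univ _) (fun x => p x.1)]
      refine Finset.sum_congr rfl (fun i _ => ?_)
      have hval : ∀ x ∈ s.filter (fun x => x.1 = i), p x.1 = p i :=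
        fun x hx => by rw [(mem_filter.mp hx).2]
      rw [Finset.sum_congr rfl hval, Finset.sum_const, nsmul_eq_mul]
      simp only [hc]
      ring
    rw [hsum, hts]
    rcases Nat.eq_zero_or_pos k with hk0 | hkpos
    · subst hk0
      have : t = ∅ := Finset.card_eq_zero.mp htc
      subst this
      have : s = ∅ := Finset.card_eq_zero.mp (by simpa using hs)
      subst this
      simp [hc]
    · have htne : t.Nonempty := Finset.card_pos.mp (htc ▸ hkpos)
      set m := t.inf' htne p with hm
      obtain ⟨i0, hi0, hmi0⟩ := Finset.exists_mem_eq_inf' htne p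
      have hmt : ∀ i ∈ t, m ≤ p i := fun i hi => Finset.inf'_le p hi
      have hmc : ∀ j, j ∉ t → p j ≤ m := by
        intro j hj; rw [hm, hmi0]; exact hex i0 hi0 j hj
      -- key inequality
      have key : ∑ i, p i * c i ≤ (n : ℝ) * ∑ i ∈ t, p i := by
        have hsplit : ∑ i ∈ t, p i * c i + ∑ i ∈ tᶜ, p i * c i = ∑ i, p i * c i :=
          Finset.sum_add_sum_compl t _
        have hcsplit : ∑ i ∈ t, c i + ∑ i ∈ tᶜ, c i = (k : ℝ) * n := by
          rw [Finset.sum_add_sum_compl]; exact hctot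
        have h1 : ∑ i ∈ t, m * ((n : ℝ) - c i) ≤ ∑ i ∈ t, p i * ((n : ℝ) - c i) :=
          Finset.sum_le_sum fun i hi =>
            mul_le_mul_of_nonneg_right (hmt i hi) (by linarith [hc1 i])
        have h2 : ∑ i ∈ tᶜ, p i * c i ≤ ∑ i ∈ tᶜ, m * c i :=
          Finset.sum_le_sum fun i hi =>
            mul_le_mul_of_nonneg_right (hmc i (by simpa using hi)) (hc0 i)
        have e1 : ∑ i ∈ t, p i * ((n : ℝ) - c i)
            = (n : ℝ) * ∑ i ∈ t, p i - ∑ i ∈ t, p i * c i := by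
          rw [Finset.mul_sum, ← Finset.sum_sub_distrib]
          exact Finset.sum_congr rfl (fun i _ => by ring)
        have e2 : ∑ i ∈ t, m * ((n : ℝ) - c i)
            = m * ((k : ℝ) * n - ∑ i ∈ t, c i) := by
          rw [← Finset.mul_sum, Finset.sum_sub_distrib, Finset.sum_const, htc]
          push_cast; ring_nf
        have e3 : ∑ i ∈ tᶜ, m * c i = m * ((k : ℝ) * n - ∑ i ∈ t, c i) := by
          rw [← Finset.mul_sum]; congr 1; linarith
        linarith
      have := mul_le_mul_of_nonneg_right key (inv_nonneg.mpr (Nat.cast_nonneg n))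
      calc (∑ i, p i * c i) * (n : ℝ)⁻¹ ≤ ((n : ℝ) * ∑ i ∈ t, p i) * (n : ℝ)⁻¹ := this
        _ = ∑ i ∈ t, p i := by field_simp
  · -- lower bound
    rw [hts]
    have hmem : ∑ i ∈ t, p i ∈ {x : ℝ | ∃ s : Finset (Fin d × Fin n), s.card = k * n ∧
        ∑ i ∈ s, p i.1 * (n : ℝ)⁻¹ = x} := by
      refine ⟨t ×ˢ univ, by simp [Finset.card_product, htc], ?_⟩
      rw [Finset.sum_product]
      refine Finset.sum_congr rfl (fun i _ => ?_)
      calc ∑ y : Fin n, p (i, y).1 * (n : ℝ)⁻¹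
          = ∑ _y : Fin n, p i * (n : ℝ)⁻¹ := rfl
        _ = n * (p i * (n : ℝ)⁻¹) := by rw [Finset.sum_const]; simp
        _ = p i := by field_simp
    exact le_csSup (sumLargest_set_finite _ _).bddAbove hmem

/-- No transformation can be catalysed by a uniform state: if `p ⊗ η_n` majorises
`q ⊗ η_n`, then already `p` majorises `q`. -/
theorem uniform_catalyst_useless {d n : ℕ} (hn : 0 < n)
    (p q : Fin d → ℝ) (hp : IsProbVec p) (hq : IsProbVec q)
    (h : Majorizes (fun x : Fin d × Fin n => p x.1 * (n : ℝ)⁻¹)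
      (fun x : Fin d × Fin n => q x.1 * (n : ℝ)⁻¹)) :
    Majorizes p q := by
  intro k hk
  have hk' : k ≤ d := by simpa using hk
  have := h (k * n) (by simp [Fintype.card_prod]; exact Nat.mul_le_mul_right n hk')
  rwa [sumLargest_tensor hn hk' p, sumLargest_tensor hn hk' q] at this
end

section
/- The set of d-dimensional probability vectors sorted in non-increasing order forms a lattice under majorisation: for any sorted p and q, the vector r defined by cumulative sums R_k = max(P_k, Q_k) after the 'flattening' correction procedure is the least upper bound (join), i.e., r ≻ p, r ≻ q, and any sorted s with s ≻ p and s ≻ q satisfies s ≻ r. -/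
open Finset

namespace MJ
/-- Partial sum of the first `k` entries. -/
noncomputable def PS {d : ℕ} (p : Fin d → ℝ) (k : ℕ) : ℝ :=
  ∑ j ∈ Finset.range k, if h : j < d then p ⟨j, h⟩ else 0

lemma PS_mono {d : ℕ} {p : Fin d → ℝ} (hp : ∀ i, 0 ≤ p i) : Monotone (PS p) := by
  intro a b hab
  apply Finset.sum_le_sum_of_subset_of_nonneg (Finset.range_subset_range.2 hab)
  intro i _ _
  split
  · exact hp _
  · exact le_refl 0

lemma PS_d {d : ℕ} (p : Fin d → ℝ) : PS p d = ∑ i, p i := by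
  rw [PS, ← Fin.sum_univ_eq_sum_range (fun j => if h : j < d then p ⟨j, h⟩ else 0) d]
  exact Finset.sum_congr rfl fun i _ => by simp [i.isLt]

lemma PS_le {d : ℕ} {p : Fin d → ℝ} (hp : ∀ i, 0 ≤ p i) (k : ℕ) :
    PS p k ≤ ∑ i, p i := by
  rw [← PS_d]
  rcases le_total k d with h | h
  · exact PS_mono hp h
  · apply le_of_eq
    symm
    apply Finset.sum_subset (Finset.range_subset_range.2 h)
    intro j _ hj
    have : ¬ j < d := by simp only [Finset.mem_range] at hj; omega
    simp [this]

lemma le_val_strictMono {k d : ℕ} {f : Fin k → Fin d} (hf : StrictMono f) :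
    ∀ n, ∀ h : n < k, n ≤ (f ⟨n, h⟩ : ℕ) := by
  intro n
  induction n with
  | zero => exact fun h => Nat.zero_le _
  | succ n ih =>
    intro h
    have h' : n < k := by omega
    have h1 : f ⟨n, h'⟩ < f ⟨n + 1, h⟩ := hf (by simp [Fin.lt_def])
    have h2 := ih h'
    have h3 := Fin.lt_def.mp h1
    omega

lemma sum_castLE {d k : ℕ} (hk : k ≤ d) (p : Fin d → ℝ) :
    ∑ j : Fin k, p (Fin.castLE hk j) = PS p k := by
  rw [PS, ← Fin.sum_univ_eq_sum_range (fun j => if h : j < d then p ⟨j, h⟩ else 0) k]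
  refine Finset.sum_congr rfl fun j _ => ?_
  have hj : (j : ℕ) < d := lt_of_lt_of_le j.isLt hk
  simp only [hj, dif_pos]
  rfl

lemma sumLargest_eq_PS {d : ℕ} {p : Fin d → ℝ} (hp : Antitone p) {k : ℕ} (hk : k ≤ d) :
    sumLargest p k = PS p k := by
  have hgr : IsGreatest {x : ℝ | ∃ s : Finset (Fin d), s.card = k ∧ ∑ i ∈ s, p i = x} (PS p k) := by
    constructor
    · refine ⟨(Finset.univ : Finset (Fin k)).map (Fin.castLEEmb hk), by simp, ?_⟩
      rw [Finset.sum_map]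
      exact sum_castLE hk p
    · rintro x ⟨s, hcard, rfl⟩
      have hsm : StrictMono (fun j : Fin k => ((s.orderIsoOfFin hcard j : s) : Fin d)) :=
        fun a b hab => by exact_mod_cast (s.orderIsoOfFin hcard).strictMono hab
      calc ∑ i ∈ s, p i = ∑ j : Fin k, p ((s.orderIsoOfFin hcard j : s) : Fin d) := by
            rw [← Finset.sum_coe_sort s p]
            exact (Fintype.sum_equiv (s.orderIsoOfFin hcard).toEquiv _ _ fun j => rfl).symm
        _ ≤ ∑ j : Fin k, p (Fin.castLE hk j) := by
            refine Finset.sum_le_sum fun j _ => hp ?_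
            rw [Fin.le_def]
            exact le_val_strictMono hsm j j.isLt
        _ = PS p k := sum_castLE hk p
  exact hgr.csSup_eq
end MJ

namespace MJ2
/-- Concave majorant of `T` on `{0,...,d}`. -/
def IsCM (d : ℕ) (T f : ℕ → ℝ) : Prop :=
  (∀ j, f (j + 2) + f j ≤ 2 * f (j + 1)) ∧ ∀ j ≤ d, T j ≤ f j

/-- Least concave majorant. -/
noncomputable def LCM (d : ℕ) (T : ℕ → ℝ) (k : ℕ) : ℝ :=
  sInf {x | ∃ f, IsCM d T f ∧ x = f k}

variable {d : ℕ} {T : ℕ → ℝ}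

lemma IsCM.incr_antitone {f : ℕ → ℝ} (hf : IsCM d T f) :
    Antitone (fun j => f (j + 1) - f j) :=
  antitone_nat_of_succ_le fun n => by have := hf.1 n; linarith

lemma IsCM.cross {f : ℕ → ℝ} (hf : IsCM d T f) {i j : ℕ} (hij : i ≤ j) :
    f (j + 1) + f i ≤ f j + f (i + 1) := by
  have := hf.incr_antitone hij
  simp only at this
  linarith

lemma IsCM.minCM {f g : ℕ → ℝ} (hf : IsCM d T f) (hg : IsCM d T g) :
    IsCM d T (fun j => min (f j) (g j)) := by
  refine ⟨fun j => ?_, fun j hj => le_min (hf.2 j hj) (hg.2 j hj)⟩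
  simp only
  rcases le_total (f (j + 1)) (g (j + 1)) with h | h
  · rw [min_eq_left h]
    have := hf.1 j
    have h1 : min (f (j + 2)) (g (j + 2)) ≤ f (j + 2) := min_le_left _ _
    have h2 : min (f j) (g j) ≤ f j := min_le_left _ _
    linarith
  · rw [min_eq_right h]
    have := hg.1 j
    have h1 : min (f (j + 2)) (g (j + 2)) ≤ g (j + 2) := min_le_right _ _
    have h2 : min (f j) (g j) ≤ g j := min_le_right _ _
    linarith

lemma isCM_one (hT1 : ∀ j ≤ d, T j ≤ 1) : IsCM d T (fun _ => 1) :=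
  ⟨fun _ => by norm_num, fun j hj => hT1 j hj⟩

lemma LCM_nonempty (hT1 : ∀ j ≤ d, T j ≤ 1) (k : ℕ) :
    Set.Nonempty {x | ∃ f, IsCM d T f ∧ x = f k} :=
  ⟨1, fun _ => 1, isCM_one hT1, rfl⟩

lemma LCM_bddBelow {k : ℕ} (hk : k ≤ d) :
    BddBelow {x | ∃ f, IsCM d T f ∧ x = f k} :=
  ⟨T k, by rintro x ⟨f, hf, rfl⟩; exact hf.2 k hk⟩

lemma LCM_le {f : ℕ → ℝ} (hf : IsCM d T f) {k : ℕ} (hk : k ≤ d) :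
    LCM d T k ≤ f k :=
  csInf_le (LCM_bddBelow hk) ⟨f, hf, rfl⟩

lemma le_LCM (hT1 : ∀ j ≤ d, T j ≤ 1) {k : ℕ} (hk : k ≤ d) : T k ≤ LCM d T k :=
  le_csInf (LCM_nonempty hT1 k) (by rintro x ⟨f, hf, rfl⟩; exact hf.2 k hk)

lemma LCM_zero (hT0 : T 0 = 0) (hT1 : ∀ j ≤ d, T j ≤ 1) : LCM d T 0 = 0 := by
  refine le_antisymm ?_ (hT0 ▸ le_LCM hT1 (Nat.zero_le d))
  have hf : IsCM d T (fun j => (j : ℝ)) := by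
    refine ⟨fun j => by push_cast; ring_nf; norm_num, fun j hj => ?_⟩
    rcases Nat.eq_zero_or_pos j with h | h
    · subst h; simp [hT0]
    · calc T j ≤ 1 := hT1 j hj
        _ ≤ (j : ℝ) := by exact_mod_cast h
  simpa using LCM_le hf (Nat.zero_le d)

lemma LCM_d (hTd : T d = 1) (hT1 : ∀ j ≤ d, T j ≤ 1) : LCM d T d = 1 := by
  refine le_antisymm ?_ (hTd ▸ le_LCM hT1 le_rfl)
  exact LCM_le (isCM_one hT1) le_rfl

lemma LCM_mono (hT1 : ∀ j ≤ d, T j ≤ 1) (hTm : ∀ j ≤ d, T j ≤ T d)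
    {k : ℕ} (hk : k + 1 ≤ d) : LCM d T k ≤ LCM d T (k + 1) := by
  apply le_csInf (LCM_nonempty hT1 (k + 1))
  rintro x ⟨f, hf, rfl⟩
  rcases le_total (f k) (f (k + 1)) with h | h
  · exact (LCM_le hf (by omega)).trans h
  · have step : ∀ m, k ≤ m → f (m + 1) ≤ f m := by
      intro m hm
      have := hf.incr_antitone hm
      simp only at this
      linarith
    have hd : ∀ n, k + 1 ≤ n → f n ≤ f (k + 1) := by
      intro n hn
      induction n, hn using Nat.le_induction with
      | base => exact le_rfl
      | succ n hn ih => exact (step n (by omega)).trans ih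
    have hconst : IsCM d T (fun _ => f (k + 1)) := by
      refine ⟨fun j => by simp only; linarith, fun j hj => ?_⟩
      calc T j ≤ T d := hTm j hj
        _ ≤ f d := hf.2 d le_rfl
        _ ≤ f (k + 1) := hd d hk
    exact LCM_le hconst (by omega)

lemma LCM_concave (hT1 : ∀ j ≤ d, T j ≤ 1) {i j : ℕ} (hij : i ≤ j) (hj : j + 1 ≤ d) :
    LCM d T (j + 1) + LCM d T i ≤ LCM d T j + LCM d T (i + 1) := by
  apply le_of_forall_pos_le_add
  intro ε hε
  obtain ⟨x1, hx1mem, hx1⟩ :=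
    Real.lt_sInf_add_pos (LCM_nonempty hT1 j) (half_pos hε)
  obtain ⟨x2, hx2mem, hx2⟩ :=
    Real.lt_sInf_add_pos (LCM_nonempty hT1 (i + 1)) (half_pos hε)
  obtain ⟨f1, hf1, rfl⟩ := hx1mem
  obtain ⟨f2, hf2, rfl⟩ := hx2mem
  have hg := hf1.minCM hf2
  have h1 : LCM d T (j + 1) ≤ min (f1 (j + 1)) (f2 (j + 1)) := LCM_le hg hj
  have h2 : LCM d T i ≤ min (f1 i) (f2 i) := LCM_le hg (by omega)
  have h3 := hg.cross hij
  have h4 : min (f1 j) (f2 j) ≤ f1 j := min_le_left _ _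
  have h5' : min (f1 (i + 1)) (f2 (i + 1)) ≤ f2 (i + 1) := min_le_right _ _
  have hx1' : f1 j < LCM d T j + ε / 2 := hx1
  have hx2' : f2 (i + 1) < LCM d T (i + 1) + ε / 2 := hx2
  linarith [h1, h2, h3, h4, h5', hx1', hx2']
end MJ2

open MJ MJ2

/-- Sorted probability vectors form a lattice under majorisation: any two sorted
probability vectors `p`, `q` have a least upper bound (join) `r`, i.e. a sorted
probability vector with `r ≻ p`, `r ≻ q`, such that every sorted probability vector
`s` with `s ≻ p` and `s ≻ q` satisfies `s ≻ r`. -/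
theorem majorization_lattice_join {d : ℕ} (p q : Fin d → ℝ)
    (hp : IsProbVec p) (hq : IsProbVec q)
    (hps : Antitone p) (hqs : Antitone q) :
    ∃ r : Fin d → ℝ, IsProbVec r ∧ Antitone r ∧
      Majorizes r p ∧ Majorizes r q ∧
      ∀ s : Fin d → ℝ, IsProbVec s → Antitone s →
        Majorizes s p → Majorizes s q → Majorizes s r := by
  set T : ℕ → ℝ := fun k => max (PS p k) (PS q k) with hT
  have hT1 : ∀ j ≤ d, T j ≤ 1 := fun j _ =>
    max_le ((PS_le hp.1 j).trans_eq hp.2) ((PS_le hq.1 j).trans_eq hq.2)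
  have hT0 : T 0 = 0 := by simp [hT, PS]
  have hTd : T d = 1 := by simp [hT, PS_d, hp.2, hq.2]
  have hTm : ∀ j ≤ d, T j ≤ T d := fun j hj =>
    max_le_max (PS_mono hp.1 hj) (PS_mono hq.1 hj)
  set R : ℕ → ℝ := LCM d T with hR
  have hR0 : R 0 = 0 := LCM_zero hT0 hT1
  have hRd : R d = 1 := LCM_d hTd hT1
  set r : Fin d → ℝ := fun i => R ((i : ℕ) + 1) - R i with hrdef
  have hrnn : ∀ i : Fin d, 0 ≤ r i := fun i =>
    sub_nonneg.2 (LCM_mono hT1 hTm i.isLt)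
  have hPSr : ∀ k ≤ d, PS r k = R k := by
    intro k hk
    have h1 : PS r k = ∑ j ∈ Finset.range k, (R (j + 1) - R j) := by
      refine Finset.sum_congr rfl fun j hj => ?_
      have hjd : j < d := lt_of_lt_of_le (Finset.mem_range.1 hj) hk
      simp [hjd]
      rfl
    rw [h1, Finset.sum_range_sub, hR0, sub_zero]
  have hrant : Antitone r := by
    intro a b hab
    have := LCM_concave hT1 (Fin.le_def.1 hab) b.isLt
    simp only [hrdef]
    change R ((b : ℕ) + 1) - R b ≤ R ((a : ℕ) + 1) - R a
    linarith
  have hrprob : IsProbVec r := by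
    refine ⟨hrnn, ?_⟩
    have := hPSr d le_rfl
    rw [PS_d] at this
    rw [this, hRd]
  have hmajp : Majorizes r p := by
    intro k hk
    rw [Fintype.card_fin] at hk
    rw [sumLargest_eq_PS hps hk, sumLargest_eq_PS hrant hk, hPSr k hk]
    exact le_trans (le_max_left _ _) (le_LCM hT1 hk)
  have hmajq : Majorizes r q := by
    intro k hk
    rw [Fintype.card_fin] at hk
    rw [sumLargest_eq_PS hqs hk, sumLargest_eq_PS hrant hk, hPSr k hk]
    exact le_trans (le_max_right _ _) (le_LCM hT1 hk)
  refine ⟨r, hrprob, hrant, hmajp, hmajq, ?_⟩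
  intro s hsprob hsant hsp hsq k hk
  rw [Fintype.card_fin] at hk
  rw [sumLargest_eq_PS hrant hk, sumLargest_eq_PS hsant hk, hPSr k hk]
  have hCM : IsCM d T (PS s) := by
    constructor
    · intro j
      have e1 : PS s (j + 1) = PS s j + (if h : j < d then s ⟨j, h⟩ else 0) :=
        Finset.sum_range_succ _ j
      have e2 : PS s (j + 2) = PS s (j + 1) + (if h : j + 1 < d then s ⟨j + 1, h⟩ else 0) :=
        Finset.sum_range_succ _ (j + 1)
      have key : (if h : j + 1 < d then s ⟨j + 1, h⟩ else 0) ≤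
          (if h : j < d then s ⟨j, h⟩ else 0) := by
        by_cases h1 : j + 1 < d
        · have h2 : j < d := by omega
          simp only [h1, h2, dif_pos]
          exact hsant (by simp [Fin.le_def])
        · by_cases h2 : j < d
          · simp only [h1, h2, dif_pos, dif_neg, not_false_iff]
            exact hsprob.1 _
          · simp [h1, h2]
      linarith
    · intro j hj
      refine max_le ?_ ?_
      · rw [← sumLargest_eq_PS hps hj, ← sumLargest_eq_PS hsant hj]
        exact hsp j (by rw [Fintype.card_fin]; exact hj)
      · rw [← sumLargest_eq_PS hqs hj, ← sumLargest_eq_PS hsant hj]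
        exact hsq j (by rw [Fintype.card_fin]; exact hj)
  exact LCM_le hCM hk
end

section
/- For 0 ≤ x ≤ 1/2 and a > 0, the duplication-type identity I_x(a,a) = (1/2) I_{4x(1−x)}(a, 1/2) holds for the regularised incomplete beta function. -/
/-- The incomplete beta function `B_x(a,b) = ∫₀ˣ t^(a−1) (1−t)^(b−1) dt`. -/
noncomputable def incBeta (x a b : ℝ) : ℝ :=
  ∫ t in (0:ℝ)..x, t ^ (a - 1) * (1 - t) ^ (b - 1)

/-- The regularised incomplete beta function `I_x(a,b) = B_x(a,b)/B(a,b)`. -/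
noncomputable def regIncBeta (x a b : ℝ) : ℝ :=
  incBeta x a b / incBeta 1 a b

open MeasureTheory Set intervalIntegral Real

lemma incBeta_dup (x a : ℝ) (hx0 : 0 ≤ x) (hx1 : x ≤ 1 / 2) :
    incBeta (4 * x * (1 - x)) a (1 / 2) = 4 ^ a * incBeta x a a := by
  have hderiv : ∀ t ∈ Ioo (0:ℝ) x,
      HasDerivWithinAt (fun t : ℝ => 4 * t * (1 - t)) (4 - 8 * t) (Ioo (0:ℝ) x) t := by
    intro t _
    have h : HasDerivAt (fun t : ℝ => 4 * t * (1 - t)) (4 * 1 * (1 - t) + 4 * t * (0 - 1)) t :=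
      ((hasDerivAt_id t).const_mul 4).mul ((hasDerivAt_const t 1).sub (hasDerivAt_id t))
    have h' : HasDerivAt (fun t : ℝ => 4 * t * (1 - t)) (4 - 8 * t) t := by
      convert h using 1; ring
    exact h'.hasDerivWithinAt
  have hinj : InjOn (fun t : ℝ => 4 * t * (1 - t)) (Ioo (0:ℝ) x) := by
    intro p hp q hq hpq
    simp only [mem_Ioo] at hp hq
    simp only at hpq
    have h : (p - q) * (1 - p - q) = 0 := by nlinarith [hpq]
    rcases mul_eq_zero.mp h with h | h
    · linarith
    · linarith [hp.2, hq.2]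
  have himg : (fun t : ℝ => 4 * t * (1 - t)) '' Ioo (0:ℝ) x = Ioo (0:ℝ) (4 * x * (1 - x)) := by
    ext u
    constructor
    · rintro ⟨t, ⟨ht0, htx⟩, rfl⟩
      simp only [mem_Ioo]
      constructor <;> nlinarith
    · rintro ⟨hu0, hux⟩
      have hu1 : u < 1 := by nlinarith
      have hs0 : (0:ℝ) ≤ Real.sqrt (1 - u) := Real.sqrt_nonneg _
      have hs1 : Real.sqrt (1 - u) < 1 := by
        have := Real.sqrt_lt_sqrt (by linarith : (0:ℝ) ≤ 1 - u) (by linarith : 1 - u < 1)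
        rwa [Real.sqrt_one] at this
      have hsq : Real.sqrt (1 - u) ^ 2 = 1 - u := Real.sq_sqrt (by linarith)
      have hlt : 1 - 2 * x < Real.sqrt (1 - u) :=
        (Real.lt_sqrt (by linarith)).mpr (by nlinarith)
      refine ⟨(1 - Real.sqrt (1 - u)) / 2, ⟨by linarith, by linarith⟩, ?_⟩
      simp only
      nlinarith [hsq]
  have key := integral_image_eq_integral_abs_deriv_smul measurableSet_Ioo hderiv hinj
    (fun u : ℝ => u ^ (a - 1) * (1 - u) ^ (1 / 2 - 1 : ℝ))
  rw [himg] at key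
  have hx4 : (0:ℝ) ≤ 4 * x * (1 - x) := by nlinarith
  have hcongr : ∫ t in Ioo (0:ℝ) x,
      |4 - 8 * t| • ((4 * t * (1 - t)) ^ (a - 1) * (1 - 4 * t * (1 - t)) ^ (1 / 2 - 1 : ℝ))
      = ∫ t in Ioo (0:ℝ) x, 4 ^ a * (t ^ (a - 1) * (1 - t) ^ (a - 1)) := by
    refine setIntegral_congr_fun measurableSet_Ioo ?_
    intro t ht
    simp only [mem_Ioo] at ht
    obtain ⟨ht0, htx⟩ := ht
    have h1 : (0:ℝ) < 1 - t := by linarith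
    have h2 : (0:ℝ) < 1 - 2 * t := by linarith
    have habs : |4 - 8 * t| = 4 - 8 * t := abs_of_pos (by linarith)
    have hmul : (4 * t * (1 - t)) ^ (a - 1)
        = 4 ^ (a - 1) * t ^ (a - 1) * (1 - t) ^ (a - 1) := by
      rw [Real.mul_rpow (by positivity) h1.le, Real.mul_rpow (by norm_num) ht0.le]
    have hq : (1 - 4 * t * (1 - t)) = (1 - 2 * t) ^ 2 := by ring
    have hpow : (1 - 4 * t * (1 - t)) ^ (1 / 2 - 1 : ℝ) = (1 - 2 * t)⁻¹ := by
      rw [hq, ← Real.rpow_natCast (1 - 2 * t) 2, ← Real.rpow_mul h2.le]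
      norm_num
      exact Real.rpow_neg_one _
    have h4 : (4:ℝ) ^ a = 4 ^ (a - 1 : ℝ) * 4 := by
      rw [← Real.rpow_add_one (by norm_num : (4:ℝ) ≠ 0)]
      ring_nf
    simp only [smul_eq_mul]
    rw [habs, hmul, hpow, h4]
    have h3 : (4 - 8 * t) * (1 - 2 * t)⁻¹ = 4 := by
      rw [show (4 - 8 * t) = 4 * (1 - 2 * t) by ring, mul_assoc, mul_inv_cancel₀ h2.ne', mul_one]
    linear_combination (4 ^ (a - 1) * t ^ (a - 1) * (1 - t) ^ (a - 1)) * h3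
  unfold incBeta
  rw [intervalIntegral.integral_of_le hx4, intervalIntegral.integral_of_le hx0,
    MeasureTheory.integral_Ioc_eq_integral_Ioo, MeasureTheory.integral_Ioc_eq_integral_Ioo,
    key, hcongr, MeasureTheory.integral_const_mul]

lemma incBeta_one_eq (a : ℝ) (ha : 0 < a) : incBeta 1 a a = 2 * incBeta (1/2) a a := by
  have hcont : ContinuousOn (fun t : ℝ => (1 - t) ^ (a - 1)) (Set.uIcc (0:ℝ) (1/2)) := by
    apply ContinuousOn.rpow_const
    · exact (continuousOn_const.sub continuousOn_id)
    · intro t ht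
      rw [Set.uIcc_of_le (by norm_num : (0:ℝ) ≤ 1/2)] at ht
      left
      have := ht.2
      intro h; linarith [ht.2]
  have hint1 : IntervalIntegrable (fun t : ℝ => t ^ (a - 1) * (1 - t) ^ (a - 1))
      volume 0 (1/2) :=
    (intervalIntegrable_rpow' (by linarith)).mul_continuousOn hcont
  have hint2 : IntervalIntegrable (fun t : ℝ => t ^ (a - 1) * (1 - t) ^ (a - 1))
      volume (1/2) 1 := by
    have h := hint1.comp_sub_left 1
    have heq : (fun t : ℝ => (1 - t) ^ (a - 1) * (1 - (1 - t)) ^ (a - 1))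
        = fun t : ℝ => t ^ (a - 1) * (1 - t) ^ (a - 1) := by
      funext t; rw [sub_sub_cancel]; ring
    rw [heq] at h
    norm_num at h
    exact h.symm
  have hadj := intervalIntegral.integral_add_adjacent_intervals hint1 hint2
  have hsym : (∫ t in (1/2:ℝ)..1, t ^ (a - 1) * (1 - t) ^ (a - 1))
      = ∫ t in (0:ℝ)..(1/2), t ^ (a - 1) * (1 - t) ^ (a - 1) := by
    have h := intervalIntegral.integral_comp_sub_left
      (fun t : ℝ => t ^ (a - 1) * (1 - t) ^ (a - 1)) 1 (a := 0) (b := 1/2)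
    norm_num at h
    rw [← h]
    apply intervalIntegral.integral_congr
    intro t _
    simp only
    ring_nf
  unfold incBeta
  rw [← hadj, hsym]
  ring

/-- Duplication-type identity `I_x(a,a) = (1/2) I_{4x(1−x)}(a, 1/2)` for `0 ≤ x ≤ 1/2`. -/
theorem regIncBeta_duplication (x a : ℝ) (hx0 : 0 ≤ x) (hx1 : x ≤ 1 / 2) (ha : 0 < a) :
    regIncBeta x a a = (1 / 2) * regIncBeta (4 * x * (1 - x)) a (1 / 2) := by
  have hK : (0:ℝ) < 4 ^ a := Real.rpow_pos_of_pos (by norm_num) a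
  have key := incBeta_dup x a hx0 hx1
  have keyhalf := incBeta_dup (1/2) a (by norm_num) (by norm_num)
  norm_num at keyhalf
  have hfull : incBeta 1 a a = 2 * (incBeta 1 a (1/2) / 4 ^ a) := by
    rw [incBeta_one_eq a ha]
    rw [keyhalf]
    field_simp
  unfold regIncBeta
  rw [hfull, key]
  rcases eq_or_ne (incBeta 1 a (1/2)) 0 with hD | hD
  · rw [hD]; simp
  · field_simp
end
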